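/- For the strip D_d = {z : 0 < Im z < d} and α ∈ (0,d), the regular part of the Green's function on the diagonal is γ(αi) = (1/2π) log(2 sin(απ/d)/(π/d)). In particular γ(αi) ≤ (1/2π) log(2d/π) for all α ∈ (0,d). -/

import Mathlib

open MeasureTheory Real Filter Topology
noncomputable section

/-- The Laplacian of a function `f : ℂ → ℝ` (identifying ℂ with ℝ²). -/
def lapC (f : ℂ → ℝ) (z : ℂ) : ℝ :=
  iteratedFDeriv ℝ 2 f z ![1, 1] + iteratedFDeriv ℝ 2 f z ![Complex.I, Complex.I]

/-- The diagonal regular part of the Green function of the strip `D_d` at the pole `αi`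
equals `(1/2π) log (2 sin(απ/d)/(π/d))`, which is at most `(1/2π) log (2d/π)`. -/
theorem strip_regular_part (d α : ℝ) (hd : 0 < d) (hα : α ∈ Set.Ioo 0 d)
    (G : ℂ → ℝ)
    (hG : ∀ z : ℂ, G z = (1/(2*π)) * Real.log (‖
      ((Complex.exp ((π : ℂ) * z / (d : ℂ)) - Complex.exp (-((α : ℂ) * (π : ℂ) * Complex.I / (d : ℂ)))) /
       (Complex.exp ((π : ℂ) * z / (d : ℂ)) - Complex.exp ((α : ℂ) * (π : ℂ) * Complex.I / (d : ℂ))))‖)) :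
    Tendsto (fun z => G z - (1/(2*π)) * Real.log (1 / ‖z - (α : ℂ) * Complex.I‖))
      (nhdsWithin ((α : ℂ) * Complex.I) {(α : ℂ) * Complex.I}ᶜ)
      (nhds ((1/(2*π)) * Real.log (2 * Real.sin (α * π / d) / (π / d)))) ∧
    (1/(2*π)) * Real.log (2 * Real.sin (α * π / d) / (π / d)) ≤ (1/(2*π)) * Real.log (2*d/π) := by
  obtain ⟨hα0, hαd⟩ := hα
  have hπ : (0:ℝ) < π := Real.pi_pos
  have hdC : (d:ℂ) ≠ 0 := by exact_mod_cast hd.ne'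
  set θ : ℝ := α * π / d with hθdef
  have hθ0 : 0 < θ := by positivity
  have hθπ : θ < π := by
    rw [hθdef, div_lt_iff₀ hd]
    nlinarith
  have hsin : 0 < Real.sin θ := Real.sin_pos_of_pos_of_lt_pi hθ0 hθπ
  set c : ℂ := (α:ℂ) * Complex.I with hcdef
  set w : ℂ := Complex.exp ((θ:ℂ) * Complex.I) with hwdef
  have key : (α:ℂ) * (π:ℂ) * Complex.I / (d:ℂ) = (θ:ℂ) * Complex.I := by
    rw [hθdef]; push_cast; ring
  have key2 : (π:ℂ) * c / (d:ℂ) = (θ:ℂ) * Complex.I := by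
    rw [hcdef, hθdef]; push_cast; ring
  set num : ℂ → ℂ := fun z => Complex.exp ((π:ℂ) * z / (d:ℂ)) - w⁻¹ with hnumdef
  set den : ℂ → ℂ := fun z => Complex.exp ((π:ℂ) * z / (d:ℂ)) - w with hdendef
  -- derivative of den at c
  have h1 : HasDerivAt (fun z : ℂ => (π:ℂ) * z / (d:ℂ)) ((π:ℂ) * 1 / d) c :=
    ((hasDerivAt_id c).const_mul (π:ℂ)).div_const (d:ℂ)
  have h2 : HasDerivAt (fun z : ℂ => Complex.exp ((π:ℂ) * z / (d:ℂ)))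
      (Complex.exp ((π:ℂ) * c / d) * ((π:ℂ) * 1 / d)) c := h1.cexp
  set D : ℂ := w * ((π:ℂ) / d) with hDdef
  have hden : HasDerivAt den D c := by
    have := h2.sub_const w
    rw [key2] at this
    have e : D = Complex.exp (↑θ * Complex.I) * (↑π * 1 / ↑d) := by rw [hDdef, hwdef]; ring
    rw [e]; exact this
  have hDne : D ≠ 0 :=
    mul_ne_zero (Complex.exp_ne_zero _)
      (div_ne_zero (by exact_mod_cast hπ.ne') hdC)
  have hdenc : den c = 0 := by
    simp only [hdendef, key2]; ring
  have hslope : Tendsto (slope den c) (𝓝[≠] c) (𝓝 D) :=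
    hasDerivAt_iff_tendsto_slope.mp hden
  have hslope_eq : slope den c = fun z => den z / (z - c) := by
    funext z; rw [slope_def_field, hdenc, sub_zero]
  have hinv : Tendsto (fun z => (z - c) / den z) (𝓝[≠] c) (𝓝 D⁻¹) := by
    have := hslope.inv₀ hDne
    rw [hslope_eq] at this
    simpa [inv_div] using this
  have hnumcont : Tendsto num (𝓝[≠] c) (𝓝 (num c)) :=
    ((Complex.continuous_exp.comp (by continuity)).sub continuous_const).continuousAt.tendsto.mono_left
      nhdsWithin_le_nhds
  have hnumc : num c = 2 * Complex.I * Complex.sin θ := by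
    simp only [hnumdef, key2, hwdef, Complex.sin, ← Complex.exp_neg]
    ring_nf
    rw [Complex.I_sq]
    ring_nf
  have hnumc_ne : num c ≠ 0 := by
    rw [hnumc]
    refine mul_ne_zero (mul_ne_zero two_ne_zero Complex.I_ne_zero) ?_
    rw [← Complex.ofReal_sin]
    exact_mod_cast hsin.ne'
  set L : ℂ := num c * D⁻¹ with hLdef
  have habsD : ‖D‖ = π / d := by
    rw [hDdef, norm_mul, norm_div, hwdef, Complex.norm_exp]
    simp [abs_of_pos hπ, abs_of_pos hd]
  have habsL : ‖L‖ = 2 * Real.sin θ / (π / d) := by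
    rw [hLdef, norm_mul, norm_inv, habsD, hnumc, norm_mul, norm_mul, ← Complex.ofReal_sin,
      Complex.norm_real, Real.norm_eq_abs, abs_of_pos hsin]
    simp [div_eq_mul_inv]
  have habsL_pos : 0 < ‖L‖ := by
    rw [habsL]; positivity
  have hF : Tendsto (fun z => num z * ((z - c) / den z)) (𝓝[≠] c) (𝓝 L) :=
    hnumcont.mul hinv
  have hlog : Tendsto (fun z => (1/(2*π)) * Real.log (‖num z * ((z - c) / den z)‖))
      (𝓝[≠] c) (𝓝 ((1/(2*π)) * Real.log (‖L‖))) := by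
    exact (((Real.continuousAt_log habsL_pos.ne').tendsto.comp
      (continuous_norm.continuousAt.tendsto.comp hF)).const_mul _)
  constructor
  · have heq : ∀ᶠ z in 𝓝[≠] c,
        (1/(2*π)) * Real.log (‖num z * ((z - c) / den z)‖)
          = G z - (1/(2*π)) * Real.log (1 / ‖z - c‖) := by
      have hzc : ∀ᶠ z in 𝓝[≠] c, z ≠ c := by
        filter_upwards [self_mem_nhdsWithin] with z hz using hz
      have hdz : ∀ᶠ z in 𝓝[≠] c, den z ≠ 0 := by
        have := hslope.eventually_ne hDne
        rw [hslope_eq] at this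
        filter_upwards [this, hzc] with z h1 h2
        intro h0
        apply h1
        rw [h0, zero_div]
      have hnz : ∀ᶠ z in 𝓝[≠] c, num z ≠ 0 := hnumcont.eventually_ne hnumc_ne
      filter_upwards [hzc, hdz, hnz] with z hzc hdz hnz
      have hzc' : z - c ≠ 0 := sub_ne_zero.mpr hzc
      have hG' : G z = (1/(2*π)) * Real.log (‖num z / den z‖) := by
        rw [hG z]
        congr 2
        rw [hnumdef, hdendef]
        simp only [key, Complex.exp_neg]
        rw [hwdef]
      rw [hG']
      have ha1 : ‖num z‖ ≠ 0 := norm_ne_zero_iff.mpr hnz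
      have ha2 : ‖den z‖ ≠ 0 := norm_ne_zero_iff.mpr hdz
      have ha3 : ‖z - c‖ ≠ 0 := norm_ne_zero_iff.mpr hzc'
      have e1 : ‖num z * ((z - c) / den z)‖
          = ‖num z‖ * ‖z - c‖ / ‖den z‖ := by
        rw [norm_mul, norm_div]; ring
      have e2 : ‖num z / den z‖
          = ‖num z‖ / ‖den z‖ := norm_div _ _
      rw [e1, e2, one_div (‖z - c‖), Real.log_inv,
        Real.log_div (mul_ne_zero ha1 ha3) ha2, Real.log_mul ha1 ha3, Real.log_div ha1 ha2]
      ring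
    rw [habsL] at hlog
    exact Tendsto.congr' heq hlog
  · have hle : 2 * Real.sin θ / (π / d) ≤ 2 * d / π := by
      have h1 : Real.sin θ ≤ 1 := Real.sin_le_one θ
      rw [div_div_eq_mul_div]
      rw [div_le_div_iff₀ hπ hπ]
      nlinarith [mul_pos hd hπ, mul_nonneg (mul_nonneg (by linarith : (0:ℝ) ≤ 2*d) hπ.le) (sub_nonneg.mpr h1)]
    have hpos : 0 < 2 * Real.sin θ / (π / d) := by positivity
    have : Real.log (2 * Real.sin θ / (π / d)) ≤ Real.log (2 * d / π) :=
      Real.log_le_log hpos hle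
    have h2π : (0:ℝ) ≤ 1/(2*π) := by positivity
    calc (1/(2*π)) * Real.log (2 * Real.sin (α * π / d) / (π / d))
        = (1/(2*π)) * Real.log (2 * Real.sin θ / (π / d)) := by rw [hθdef]
      _ ≤ (1/(2*π)) * Real.log (2*d/π) := mul_le_mul_of_nonneg_left this h2π
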